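/- Let r ≥ 2 and let n ≥ 2 be odd. In S_{2rn}, for 1 ≤ j ≤ n let A_j be the 2r-cycle (2r(j-1)+1, …, 2rj), let π = A_1⋯A_n, and for 1 ≤ i ≤ n-1 let B_i = ∏_{m=1}^{2r}(2r(i-1)+m, 2ri+m). Let g ∈ S_{2rn} be such that g π g⁻¹ commutes with π, and suppose g π g⁻¹ = A_1^{d_1}⋯A_n^{d_n}·B and g⁻¹ π g = A_1^{e_1}⋯A_n^{e_n}·B', where d_1,…,d_n, e_1,…,e_n are integers and B, B' lie in the subgroup generated by B_1,…,B_{n-1}. Then ∑_{j=1}^n (e_j + d_j) is even. -/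

import Mathlib

open Equiv Equiv.Perm

lemma signA_aux (r n j : ℕ) (hr : 2 ≤ r) (hj : j < n)
    (Aj : Equiv.Perm (Fin (2 * r * n)))
    (hAj : ∀ x : Fin (2 * r * n),
      ((Aj x : ℕ)) = if (x : ℕ) / (2 * r) = j
        then 2 * r * j + ((x : ℕ) % (2 * r) + 1) % (2 * r) else (x : ℕ)) :
    Equiv.Perm.sign Aj = -1 := by
  have h2r : 0 < 2 * r := by omega
  have hb : ∀ m : Fin (2 * r), 2 * r * j + (m : ℕ) < 2 * r * n := by
    intro m
    have h1 : 2 * r * (j + 1) ≤ 2 * r * n := Nat.mul_le_mul_left _ hj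
    have h2 : 2 * r * (j + 1) = 2 * r * j + 2 * r := by ring
    have := m.isLt
    omega
  set l : List (Fin (2 * r * n)) :=
    List.ofFn (fun m : Fin (2 * r) => ⟨2 * r * j + (m : ℕ), hb m⟩) with hl
  have hnd : l.Nodup := by
    rw [hl, List.nodup_ofFn]
    intro a b hab
    have : 2 * r * j + (a : ℕ) = 2 * r * j + (b : ℕ) := congrArg Fin.val hab
    exact Fin.ext (by omega)
  have hlen : l.length = 2 * r := by simp [hl]
  have hAeq : Aj = l.formPerm := by
    ext x
    rcases eq_or_ne ((x : ℕ) / (2 * r)) j with hx | hx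
    · have hdm := Nat.div_add_mod (x : ℕ) (2 * r)
      rw [hx] at hdm
      have hm : (x : ℕ) % (2 * r) < l.length := by rw [hlen]; exact Nat.mod_lt _ h2r
      have hx2 : x = l[(x : ℕ) % (2 * r)] := by
        apply Fin.ext
        simp only [hl, List.getElem_ofFn]
        omega
      rw [hAj x, if_pos hx]
      conv_rhs => rw [hx2]
      rw [List.formPerm_apply_getElem _ hnd]
      simp only [hl, List.getElem_ofFn]
      simp only [List.length_ofFn]
    · have hxl : x ∉ l := by
        simp only [hl, List.mem_ofFn, Set.mem_range, not_exists]
        intro m hm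
        apply hx
        have : (x : ℕ) = 2 * r * j + (m : ℕ) := (congrArg Fin.val hm).symm
        rw [this, Nat.mul_add_div h2r]
        simp [Nat.div_eq_of_lt m.isLt]
      rw [List.formPerm_apply_of_notMem hxl, hAj x, if_neg hx]
  have hcy : l.formPerm.IsCycle := List.isCycle_formPerm hnd (by omega)
  have hsup : l.formPerm.support = l.toFinset := by
    refine List.support_formPerm_of_nodup l hnd ?_
    intro y hy
    have := congrArg List.length hy
    simp [hlen] at this
  rw [hAeq, hcy.sign, hsup, List.toFinset_card_of_nodup hnd, hlen]
  have : ((-1 : ℤˣ)) ^ (2 * r) = 1 := Even.neg_one_pow ⟨r, by ring⟩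
  rw [this]

lemma signB_aux (r n i : ℕ) (hr : 2 ≤ r) (hi : i + 1 < n)
    (Bi : Equiv.Perm (Fin (2 * r * n)))
    (hBi : ∀ x : Fin (2 * r * n),
      ((Bi x : ℕ)) = if (x : ℕ) / (2 * r) = i then (x : ℕ) + 2 * r
        else if (x : ℕ) / (2 * r) = i + 1 then (x : ℕ) - 2 * r else (x : ℕ)) :
    Equiv.Perm.sign Bi = 1 := by
  have h2r : 0 < 2 * r := by omega
  have hb : ∀ m : Fin (2 * (2 * r)), 2 * r * i + (m : ℕ) < 2 * r * n := by
    intro m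
    have h1 : 2 * r * (i + 2) ≤ 2 * r * n := Nat.mul_le_mul_left _ hi
    have h2 : 2 * r * (i + 2) = 2 * r * i + 2 * (2 * r) := by ring
    have := m.isLt
    omega
  set l : List (Fin (2 * r * n)) :=
    List.ofFn (fun m : Fin (2 * (2 * r)) => ⟨2 * r * i + (m : ℕ), hb m⟩) with hl
  have hnd : l.Nodup := by
    rw [hl, List.nodup_ofFn]
    intro a b hab
    have : 2 * r * i + (a : ℕ) = 2 * r * i + (b : ℕ) := congrArg Fin.val hab
    exact Fin.ext (by omega)
  have hlen : l.length = 2 * (2 * r) := by simp [hl]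
  have hBeq : Bi = l.formPerm ^ (2 * r) := by
    ext x
    have hdm := Nat.div_add_mod (x : ℕ) (2 * r)
    have hxmod := Nat.mod_lt (x : ℕ) h2r
    rcases eq_or_ne ((x : ℕ) / (2 * r)) i with hx | hx
    · -- block i : t = x - 2ri < 2r
      rw [hx] at hdm
      set t := (x : ℕ) % (2 * r) with ht
      have htl : t < l.length := by rw [hlen]; omega
      have hx2 : x = l[t] := by
        apply Fin.ext
        simp only [hl, List.getElem_ofFn]
        omega
      have hmod : (t + 2 * r) % (2 * (2 * r)) = t + 2 * r :=
        Nat.mod_eq_of_lt (by omega)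
      rw [hBi x, if_pos hx]
      conv_rhs => rw [hx2]
      rw [List.formPerm_pow_apply_getElem _ hnd]
      simp only [hl, List.getElem_ofFn]
      simp only [List.length_ofFn, hmod]
      omega
    · rcases eq_or_ne ((x : ℕ) / (2 * r)) (i + 1) with hx' | hx'
      · rw [hx'] at hdm
        have h3 : 2 * r * (i + 1) = 2 * r * i + 2 * r := by ring
        set t := (x : ℕ) % (2 * r) + 2 * r with ht
        have htl : t < l.length := by rw [hlen]; omega
        have hx2 : x = l[t] := by
          apply Fin.ext
          simp only [hl, List.getElem_ofFn]
          omega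
        have hmod : (t + 2 * r) % (2 * (2 * r)) = t - 2 * r := by
          rw [Nat.mod_eq_sub_mod (by omega), Nat.mod_eq_of_lt (by omega)]
          omega
        rw [hBi x, if_neg hx, if_pos hx']
        conv_rhs => rw [hx2]
        rw [List.formPerm_pow_apply_getElem _ hnd]
        simp only [hl, List.getElem_ofFn]
        simp only [List.length_ofFn, hmod]
        omega
      · have hxl : x ∉ l := by
          simp only [hl, List.mem_ofFn, Set.mem_range, not_exists]
          intro m hm
          have hmv : (x : ℕ) = 2 * r * i + (m : ℕ) := (congrArg Fin.val hm).symm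
          have hdiv : (x : ℕ) / (2 * r) = i + (m : ℕ) / (2 * r) := by
            rw [hmv, Nat.mul_add_div h2r]
          have hml := m.isLt
          have : (m : ℕ) / (2 * r) < 2 := Nat.div_lt_of_lt_mul (by omega)
          interval_cases h : (m : ℕ) / (2 * r) <;> omega
        have hfix : l.formPerm x = x := List.formPerm_apply_of_notMem hxl
        rw [Equiv.Perm.pow_apply_eq_self_of_apply_eq_self hfix, hBi x, if_neg hx, if_neg hx']
  rw [hBeq, map_pow, pow_mul']
  exact Int.units_sq _

lemma zpow_sum_units {ι : Type*} (s : Finset ι) (f : ι → ℤ) (a : ℤˣ) :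
    ∏ i ∈ s, a ^ f i = a ^ (∑ i ∈ s, f i) := by
  classical
  induction s using Finset.induction with
  | empty => simp
  | insert _ _ h ih =>
      rw [Finset.prod_insert h, Finset.sum_insert h, zpow_add, ih]

lemma neg_one_zpow_eq_one_iff_even {k : ℤ} : ((-1 : ℤˣ)) ^ k = 1 ↔ Even k := by
  constructor
  · intro h
    by_contra hodd
    obtain ⟨m, hm⟩ := Int.not_even_iff_odd.mp hodd
    rw [hm, zpow_add, zpow_mul, zpow_one] at h
    have h2 : ((-1 : ℤˣ)) ^ (2 : ℤ) = 1 := by decide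
    rw [h2, one_zpow, one_mul] at h
    exact absurd h (by decide)
  · rintro ⟨m, rfl⟩
    rw [zpow_add, ← mul_zpow]
    norm_num



/-- Let `r ≥ 2` and let `n ≥ 2` be odd.  In `S_{2rn}` (on
`Fin (2*r*n)`, `0`-indexed), for `0 ≤ j < n` let `A j` be the `2r`-cycle on the
`j`-th block of size `2r`, `π = A_0 ⋯ A_{n-1}`, and for `0 ≤ i < n-1` let `B i`
swap blocks `i` and `i+1` position-by-position.  Let `g` be such that `g π g⁻¹`
commutes with `π`, and suppose `g π g⁻¹ = A_0^{d_0} ⋯ A_{n-1}^{d_{n-1}} · B₀` and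
`g⁻¹ π g = A_0^{e_0} ⋯ A_{n-1}^{e_{n-1}} · B₀'` with integers `d_j, e_j` and
`B₀, B₀'` in the subgroup generated by the `B i`'s.  Then `∑_j (e_j + d_j)` is
even. -/
theorem stmt10 (r n : ℕ) (hr : 2 ≤ r) (hn : 2 ≤ n) (hodd : Odd n)
    (A : ℕ → Equiv.Perm (Fin (2 * r * n)))
    (hA : ∀ j < n, ∀ x : Fin (2 * r * n),
      ((A j x : ℕ)) = if (x : ℕ) / (2 * r) = j
        then 2 * r * j + ((x : ℕ) % (2 * r) + 1) % (2 * r) else (x : ℕ))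
    (π : Equiv.Perm (Fin (2 * r * n)))
    (hπ : ∀ x : Fin (2 * r * n),
      ((π x : ℕ)) = 2 * r * ((x : ℕ) / (2 * r)) + ((x : ℕ) % (2 * r) + 1) % (2 * r))
    (B : ℕ → Equiv.Perm (Fin (2 * r * n)))
    (hB : ∀ i, i + 1 < n → ∀ x : Fin (2 * r * n),
      ((B i x : ℕ)) = if (x : ℕ) / (2 * r) = i then (x : ℕ) + 2 * r
        else if (x : ℕ) / (2 * r) = i + 1 then (x : ℕ) - 2 * r else (x : ℕ))
    (g : Equiv.Perm (Fin (2 * r * n)))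
    (hcomm : Commute (g * π * g⁻¹) π)
    (d e : Fin n → ℤ) (B₀ B₀' : Equiv.Perm (Fin (2 * r * n)))
    (hB₀ : B₀ ∈ Subgroup.closure (B '' {i | i + 1 < n}))
    (hB₀' : B₀' ∈ Subgroup.closure (B '' {i | i + 1 < n}))
    (hd : g * π * g⁻¹ = (List.ofFn fun j : Fin n => A (j : ℕ) ^ d j).prod * B₀)
    (he : g⁻¹ * π * g = (List.ofFn fun j : Fin n => A (j : ℕ) ^ e j).prod * B₀') :
    Even (∑ j : Fin n, (e j + d j)) := by
  clear hcomm hπ hodd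
  have hsA : ∀ j : Fin n, Equiv.Perm.sign (A (j : ℕ)) = -1 :=
    fun j => signA_aux r n j hr j.isLt (A j) (hA j j.isLt)
  have hsB : ∀ σ ∈ Subgroup.closure (B '' {i | i + 1 < n}),
      Equiv.Perm.sign σ = 1 := by
    intro σ hσ
    induction hσ using Subgroup.closure_induction with
    | mem y hy =>
        obtain ⟨i, hi, rfl⟩ := hy
        exact signB_aux r n i hr hi (B i) (hB i hi)
    | one => simp
    | mul y z _ _ hy hz => rw [map_mul, hy, hz, one_mul]
    | inv y _ hy => rw [map_inv, hy, inv_one]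
  have hconj : ∀ h : Equiv.Perm (Fin (2 * r * n)),
      Equiv.Perm.sign (h * π * h⁻¹) = Equiv.Perm.sign π := by
    intro h
    rw [map_mul, map_mul, map_inv, mul_comm (Equiv.Perm.sign h),
      mul_assoc, mul_inv_cancel, mul_one]
  have hprod : ∀ f : Fin n → ℤ,
      Equiv.Perm.sign (List.ofFn fun j : Fin n => A (j : ℕ) ^ f j).prod
        = (-1 : ℤˣ) ^ (∑ j, f j) := by
    intro f
    rw [map_list_prod, List.map_ofFn, List.prod_ofFn]
    rw [← zpow_sum_units]
    refine Finset.prod_congr rfl fun j _ => ?_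
    simp only [Function.comp_apply, map_zpow, hsA j]
  have hd' : Equiv.Perm.sign π = (-1 : ℤˣ) ^ (∑ j, d j) := by
    rw [← hconj g, hd, map_mul, hsB B₀ hB₀, mul_one, hprod]
  have he' : Equiv.Perm.sign π = (-1 : ℤˣ) ^ (∑ j, e j) := by
    have := hconj g⁻¹
    rw [inv_inv] at this
    rw [← this, he, map_mul, hsB B₀' hB₀', mul_one, hprod]
  rw [← neg_one_zpow_eq_one_iff_even]
  rw [Finset.sum_add_distrib, zpow_add, ← he', ← hd']
  exact Int.units_mul_self _
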